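/- For every X ∈ G_β and every 1 ≤ i ≤ N one has 0 ≤ Q_X(i) ≤ 1, and for all X, Y ∈ G_β and every 1 ≤ i ≤ N one has |Q_X(i) − Q_Y(i)| ≤ max(N³/β², N/β)·‖X − Y‖₁. -/
import Mathlib

/-- `m_X = ∑_{k=1}^N X(k)`. -/
noncomputable def mS (N : ℕ) (X : ℕ → ℝ) : ℝ := ∑ k ∈ Finset.Icc 1 N, X k

/-- `M_X = ∑_{k=1}^N k·X(k)`. -/
noncomputable def MS (N : ℕ) (X : ℕ → ℝ) : ℝ := ∑ k ∈ Finset.Icc 1 N, (k : ℝ) * X k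

/-- `Q_X(i) = (1/M_X)·∑_{k=i}^N k·X(k)`. -/
noncomputable def QS (N : ℕ) (X : ℕ → ℝ) (i : ℕ) : ℝ :=
  (∑ k ∈ Finset.Icc i N, (k : ℝ) * X k) / MS N X

/-- The 1-norm `‖X − Y‖₁ = ∑_{k=0}^N |X(k) − Y(k)|`. -/
noncomputable def norm1 (N : ℕ) (X Y : ℕ → ℝ) : ℝ :=
  ∑ k ∈ Finset.range (N + 1), |X k - Y k|

/-- Membership in the cube `[0,1]^{N+1}`. -/
def cube (N : ℕ) (X : ℕ → ℝ) : Prop := ∀ k ≤ N, 0 ≤ X k ∧ X k ≤ 1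

/-- `G_β = {X ∈ [0,1]^{N+1} : m_X ≥ β}`. -/
def Gset (N : ℕ) (β : ℝ) (X : ℕ → ℝ) : Prop := cube N X ∧ β ≤ mS N X

lemma MS_ge (N : ℕ) (β : ℝ) (X : ℕ → ℝ) (hX : Gset N β X) : β ≤ MS N X := by
  refine hX.2.trans (Finset.sum_le_sum fun k hk => ?_)
  rw [Finset.mem_Icc] at hk
  have h0 := (hX.1 k hk.2).1
  have h1 : (1 : ℝ) ≤ (k : ℝ) := by exact_mod_cast hk.1
  nlinarith

lemma sub_sum_le (N : ℕ) (X : ℕ → ℝ) (hX : cube N X) (s : Finset ℕ)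
    (hs : s ⊆ Finset.Icc 1 N) :
    0 ≤ ∑ k ∈ s, (k : ℝ) * X k ∧ ∑ k ∈ s, (k : ℝ) * X k ≤ MS N X := by
  constructor
  · refine Finset.sum_nonneg fun k hk => ?_
    have := Finset.mem_Icc.mp (hs hk)
    exact mul_nonneg (Nat.cast_nonneg k) (hX k this.2).1
  · refine Finset.sum_le_sum_of_subset_of_nonneg hs fun k hk _ => ?_
    have := Finset.mem_Icc.mp hk
    exact mul_nonneg (Nat.cast_nonneg k) (hX k this.2).1

theorem QS_bounds_and_lipschitz (N : ℕ) (hN : 1 ≤ N) (β : ℝ) (hβ0 : 0 < β) (hβ1 : β < 1) :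
    (∀ X : ℕ → ℝ, Gset N β X → ∀ i : ℕ, 1 ≤ i → i ≤ N →
      0 ≤ QS N X i ∧ QS N X i ≤ 1) ∧
    (∀ X Y : ℕ → ℝ, Gset N β X → Gset N β Y → ∀ i : ℕ, 1 ≤ i → i ≤ N →
      |QS N X i - QS N Y i| ≤ max ((N : ℝ) ^ 3 / β ^ 2) ((N : ℝ) / β) * norm1 N X Y) := by
  constructor
  · intro X hX i hi1 hiN
    have hM : β ≤ MS N X := MS_ge N β X hX
    have hMpos : 0 < MS N X := lt_of_lt_of_le hβ0 hM
    have hsub : Finset.Icc i N ⊆ Finset.Icc 1 N := Finset.Icc_subset_Icc hi1 le_rfl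
    obtain ⟨h0, h1⟩ := sub_sum_le N X hX.1 _ hsub
    exact ⟨div_nonneg h0 hMpos.le, (div_le_one hMpos).mpr h1⟩
  · intro X Y hX hY i hi1 hiN
    have hMX : β ≤ MS N X := MS_ge N β X hX
    have hMY : β ≤ MS N Y := MS_ge N β Y hY
    have hMXpos : 0 < MS N X := lt_of_lt_of_le hβ0 hMX
    have hMYpos : 0 < MS N Y := lt_of_lt_of_le hβ0 hMY
    set a := ∑ k ∈ Finset.Icc i N, (k : ℝ) * X k with ha
    set b := ∑ k ∈ Finset.Icc i N, (k : ℝ) * Y k with hb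
    set c := ∑ k ∈ Finset.Ico 1 i, (k : ℝ) * X k with hc
    set d := ∑ k ∈ Finset.Ico 1 i, (k : ℝ) * Y k with hd
    have hsplitX : MS N X = c + a := by
      rw [MS, ← Finset.Ico_add_one_right_eq_Icc, ha, ← Finset.Ico_add_one_right_eq_Icc,
        Finset.sum_Ico_consecutive _ hi1 (by omega : i ≤ N + 1)]
    have hsplitY : MS N Y = d + b := by
      rw [MS, ← Finset.Ico_add_one_right_eq_Icc, hb, ← Finset.Ico_add_one_right_eq_Icc,
        Finset.sum_Ico_consecutive _ hi1 (by omega : i ≤ N + 1)]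
    have hsub1 : Finset.Icc i N ⊆ Finset.Icc 1 N := Finset.Icc_subset_Icc hi1 le_rfl
    have hsub2 : Finset.Ico 1 i ⊆ Finset.Icc 1 N := by
      intro k hk
      rw [Finset.mem_Ico] at hk
      rw [Finset.mem_Icc]
      omega
    obtain ⟨ha0, haM⟩ := sub_sum_le N X hX.1 _ hsub1
    obtain ⟨hc0, hcM⟩ := sub_sum_le N X hX.1 _ hsub2
    obtain ⟨hb0, hbM⟩ := sub_sum_le N Y hY.1 _ hsub1
    obtain ⟨hd0, hdM⟩ := sub_sum_le N Y hY.1 _ hsub2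
    -- bound on |a - b| + |d - c|
    have hnorm0 : 0 ≤ norm1 N X Y := Finset.sum_nonneg fun k _ => abs_nonneg _
    have key : |a - b| + |d - c| ≤ (N : ℝ) * norm1 N X Y := by
      have h1 : |a - b| ≤ ∑ k ∈ Finset.Icc i N, (N : ℝ) * |X k - Y k| := by
        rw [ha, hb, ← Finset.sum_sub_distrib]
        refine (Finset.abs_sum_le_sum_abs _ _).trans (Finset.sum_le_sum fun k hk => ?_)
        have hkN : (k : ℝ) ≤ N := by exact_mod_cast (Finset.mem_Icc.mp hk).2
        rw [← mul_sub, abs_mul, abs_of_nonneg (Nat.cast_nonneg k : (0:ℝ) ≤ k)]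
        exact mul_le_mul_of_nonneg_right hkN (abs_nonneg _)
      have h2 : |d - c| ≤ ∑ k ∈ Finset.Ico 1 i, (N : ℝ) * |X k - Y k| := by
        rw [hd, hc, ← Finset.sum_sub_distrib]
        refine (Finset.abs_sum_le_sum_abs _ _).trans (Finset.sum_le_sum fun k hk => ?_)
        have hkN : (k : ℝ) ≤ N := by
          have := (Finset.mem_Ico.mp hk).2
          exact_mod_cast (by omega : k ≤ N)
        rw [← mul_sub, abs_mul, abs_of_nonneg (Nat.cast_nonneg k : (0:ℝ) ≤ k),
          abs_sub_comm]
        exact mul_le_mul_of_nonneg_right hkN (abs_nonneg _)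
      have h3 : (∑ k ∈ Finset.Ico 1 i, (N : ℝ) * |X k - Y k|)
          + ∑ k ∈ Finset.Icc i N, (N : ℝ) * |X k - Y k|
          ≤ (N : ℝ) * norm1 N X Y := by
        rw [← Finset.Ico_add_one_right_eq_Icc,
          Finset.sum_Ico_consecutive _ hi1 (by omega : i ≤ N + 1),
          norm1, Finset.mul_sum]
        refine Finset.sum_le_sum_of_subset_of_nonneg ?_ fun k _ _ =>
          mul_nonneg (Nat.cast_nonneg N) (abs_nonneg _)
        intro k hk
        rw [Finset.mem_Ico] at hk
        exact Finset.mem_range.mpr (by omega)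
      linarith
    -- main estimate
    have hQ : QS N X i - QS N Y i = (a * d - b * c) / (MS N X * MS N Y) := by
      rw [QS, QS, ← ha, ← hb, div_sub_div _ _ (ne_of_gt hMXpos) (ne_of_gt hMYpos)]
      congr 1
      rw [hsplitX, hsplitY]; ring
    have hnum : |a * d - b * c| ≤ MS N X * ((N : ℝ) * norm1 N X Y) := by
      have : a * d - b * c = a * (d - c) + c * (a - b) := by ring
      rw [this]
      calc |a * (d - c) + c * (a - b)| ≤ |a * (d - c)| + |c * (a - b)| := abs_add_le _ _
        _ = a * |d - c| + c * |a - b| := by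
            rw [abs_mul, abs_mul, abs_of_nonneg ha0, abs_of_nonneg hc0]
        _ ≤ MS N X * |d - c| + MS N X * |a - b| := by
            gcongr
        _ ≤ MS N X * ((N : ℝ) * norm1 N X Y) := by
            rw [← mul_add]
            exact mul_le_mul_of_nonneg_left (by linarith) hMXpos.le
    have step1 : |QS N X i - QS N Y i| ≤ (N : ℝ) * norm1 N X Y / MS N Y := by
      rw [hQ, abs_div, abs_of_pos (mul_pos hMXpos hMYpos)]
      rw [div_le_div_iff₀ (mul_pos hMXpos hMYpos) hMYpos]
      calc |a * d - b * c| * MS N Y ≤ MS N X * ((N : ℝ) * norm1 N X Y) * MS N Y := by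
            exact mul_le_mul_of_nonneg_right hnum hMYpos.le
        _ = (N : ℝ) * norm1 N X Y * (MS N X * MS N Y) := by ring
    have step2 : (N : ℝ) * norm1 N X Y / MS N Y ≤ (N : ℝ) / β * norm1 N X Y := by
      rw [div_mul_eq_mul_div, mul_comm ((N:ℝ)) (norm1 N X Y), mul_div_assoc,
        mul_div_assoc]
      refine mul_le_mul_of_nonneg_left ?_ hnorm0
      exact div_le_div_of_nonneg_left (Nat.cast_nonneg N) hβ0 hMY
    have step3 : (N : ℝ) / β ≤ max ((N : ℝ) ^ 3 / β ^ 2) ((N : ℝ) / β) := le_max_right _ _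
    calc |QS N X i - QS N Y i| ≤ (N : ℝ) / β * norm1 N X Y := by
          calc |QS N X i - QS N Y i| ≤ (N : ℝ) * norm1 N X Y / MS N Y := step1
            _ ≤ (N : ℝ) / β * norm1 N X Y := step2
      _ ≤ max ((N : ℝ) ^ 3 / β ^ 2) ((N : ℝ) / β) * norm1 N X Y :=
          mul_le_mul_of_nonneg_right step3 hnorm0
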